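/- Let L be a locally finite modular lattice, let S be a set of covering pairs of L that is closed under cover-projectivity, and fix z ∈ L. Then the set C = {x ∈ L : x ∼ z} is a convex sublattice of L; that is, if x, y ∈ C then x ⊓ y ∈ C and x ⊔ y ∈ C, and if x, v ∈ C and x ≤ y ≤ v then y ∈ C. -/

import Mathlib

/-- A set `S` of covering pairs of a lattice is closed under cover-projectivity. -/
def CoverProjClosed {L : Type*} [Lattice L] (S : Set (L × L)) : Prop :=
  ∀ x y : L, x ≠ y → x ⊓ y ⋖ x → x ⊓ y ⋖ y → x ⋖ x ⊔ y → y ⋖ x ⊔ y →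
    (((x ⊓ y, x) ∈ S ↔ (y, x ⊔ y) ∈ S) ∧ ((x ⊓ y, y) ∈ S ↔ (x, x ⊔ y) ∈ S))

/-- `Sim S x y` holds iff every covering path from `x ⊓ y` to `x ⊔ y` contains no covering
pair belonging to `S`. -/
def Sim {L : Type*} [Lattice L] (S : Set (L × L)) (x y : L) : Prop :=
  ∀ (n : ℕ) (c : ℕ → L), c 0 = x ⊓ y → c n = x ⊔ y → (∀ i < n, c i ⋖ c (i + 1)) →
    ∀ i < n, (c i, c (i + 1)) ∉ S


section Aux

variable {L : Type*} [Lattice L]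

/-- Monotonicity along a covering chain. -/
lemma chain_mono {n : ℕ} {c : ℕ → L} (hc : ∀ i < n, c i ⋖ c (i + 1)) :
    ∀ i j, i ≤ j → j ≤ n → c i ≤ c j := by
  intro i j hij hjn
  induction j with
  | zero => simpa [Nat.le_zero.mp hij] using le_rfl
  | succ k ih =>
    rcases Nat.le_succ_iff.mp hij with h | h
    · exact le_trans (ih h (le_trans (Nat.le_succ k) hjn))
        (hc k (Nat.lt_of_succ_le hjn)).le
    · exact le_of_eq (congrArg c h)

variable [LocallyFiniteOrder L]

/-- Existence of a covering chain between comparable elements in a locally finite order. -/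
lemma exists_covChain {a b : L} (hab : a ≤ b) :
    ∃ (n : ℕ) (c : ℕ → L), c 0 = a ∧ c n = b ∧ ∀ i < n, c i ⋖ c (i + 1) := by
  classical
  generalize hN : (Finset.Icc a b).card = N
  induction N using Nat.strong_induction_on generalizing a with
  | _ N ih =>
    rcases eq_or_lt_of_le hab with rfl | hlt
    · exact ⟨0, fun _ => a, rfl, rfl, fun i h => absurd h (Nat.not_lt_zero i)⟩
    · have hTne : ((Finset.Icc a b).filter (fun t => ¬ t ≤ a)).Nonempty :=
        ⟨b, Finset.mem_filter.mpr ⟨Finset.mem_Icc.mpr ⟨hab, le_rfl⟩, not_le_of_gt hlt⟩⟩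
      obtain ⟨w, hwmem, hwmin⟩ : ∃ w ∈ (Finset.Icc a b).filter (fun t => ¬ t ≤ a),
          ∀ x ∈ (Finset.Icc a b).filter (fun t => ¬ t ≤ a), ¬ x < w := by
        obtain ⟨w, hw⟩ := Finset.exists_minimal hTne
        exact ⟨w, hw.1, fun x hx hxw => hw.not_lt hx hxw⟩
      simp only [Finset.mem_filter, Finset.mem_Icc] at hwmem
      obtain ⟨⟨haw, hwb⟩, haltw⟩ := hwmem
      have hawlt : a < w := lt_of_le_not_ge haw haltw
      have hcov : a ⋖ w := by
        refine ⟨hawlt, fun t hat htw => ?_⟩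
        exact hwmin t (Finset.mem_filter.mpr ⟨Finset.mem_Icc.mpr
          ⟨hat.le, le_trans htw.le hwb⟩, not_le_of_gt hat⟩) htw
      have hcard : (Finset.Icc w b).card < N := by
        rw [← hN]
        apply Finset.card_lt_card
        constructor
        · intro t ht
          simp only [Finset.mem_Icc] at ht ⊢
          exact ⟨le_trans haw ht.1, ht.2⟩
        · intro hsub
          have := hsub (Finset.mem_Icc.mpr ⟨le_rfl, hab⟩)
          simp only [Finset.mem_Icc] at this
          exact haltw this.1
      obtain ⟨n, c, h0, hn, hcc⟩ := ih _ hcard hwb rfl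
      refine ⟨n + 1, fun i => if i = 0 then a else c (i - 1), by simp, by simp [hn], ?_⟩
      intro i hi
      rcases Nat.eq_zero_or_pos i with rfl | hpos
      · simpa [h0] using hcov
      · have h1 : i ≠ 0 := Nat.pos_iff_ne_zero.mp hpos
        have h2 : i + 1 ≠ 0 := Nat.succ_ne_zero i
        simp only [h1, h2, if_false]
        have : i - 1 < n := by omega
        have := hcc (i - 1) this
        have heq : i - 1 + 1 = i + 1 - 1 := by omega
        rwa [heq] at this

end Aux
section Core

variable {L : Type*} [Lattice L] [LocallyFiniteOrder L] [IsModularLattice L]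

/-- No cover inside `[a, b]` belongs to `S`. -/
def Good (S : Set (L × L)) (a b : L) : Prop :=
  ∀ u v : L, a ≤ u → v ≤ b → u ⋖ v → (u, v) ∉ S

lemma good_mono {S : Set (L × L)} {a b a' b' : L} (h : Good S a b) (ha : a ≤ a') (hb : b' ≤ b) :
    Good S a' b' := fun u v hu hv huv => h u v (le_trans ha hu) (le_trans hv hb) huv

lemma sim_iff_good {S : Set (L × L)} {x y : L} : Sim S x y ↔ Good S (x ⊓ y) (x ⊔ y) := by
  constructor
  · intro hsim u v hu hv huv
    obtain ⟨n₁, c₁, h10, h1n, h1c⟩ := exists_covChain hu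
    obtain ⟨n₂, c₂, h20, h2n, h2c⟩ := exists_covChain hv
    classical
    set c : ℕ → L := fun i => if i ≤ n₁ then c₁ i else c₂ (i - (n₁ + 1)) with hc
    have hcm : ∀ i < n₁ + 1 + n₂, c i ⋖ c (i + 1) := by
      intro i hi
      rcases lt_trichotomy i n₁ with h | h | h
      · simp only [hc, if_pos h.le, if_pos (Nat.succ_le_of_lt h)]
        exact h1c i h
      · subst h
        simp only [hc, if_pos le_rfl, if_neg (Nat.not_succ_le_self i)]
        have : i + 1 - (i + 1) = 0 := Nat.sub_self (i + 1)
        rw [this, h20, h1n]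
        exact huv
      · have h1 : ¬ i ≤ n₁ := Nat.not_le_of_lt h
        have h2 : ¬ i + 1 ≤ n₁ := fun hh => h1 (Nat.le_of_succ_le hh)
        simp only [hc, if_neg h1, if_neg h2]
        have h3 : i - (n₁ + 1) < n₂ := by omega
        have := h2c (i - (n₁ + 1)) h3
        have heq : i - (n₁ + 1) + 1 = i + 1 - (n₁ + 1) := by omega
        rwa [heq] at this
    have h0 : c 0 = x ⊓ y := by simp [hc, h10]
    have hn : c (n₁ + 1 + n₂) = x ⊔ y := by
      have : ¬ n₁ + 1 + n₂ ≤ n₁ := by omega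
      simp only [hc, if_neg this]
      have : n₁ + 1 + n₂ - (n₁ + 1) = n₂ := by omega
      rw [this, h2n]
    have := hsim (n₁ + 1 + n₂) c h0 hn hcm n₁ (by omega)
    have e1 : c n₁ = u := by simp [hc, h1n]
    have e2 : c (n₁ + 1) = v := by
      simp only [hc, if_neg (Nat.not_succ_le_self n₁)]
      have : n₁ + 1 - (n₁ + 1) = 0 := Nat.sub_self (n₁ + 1)
      rw [this, h20]
    rwa [e1, e2] at this
  · intro hg n c h0 hn hcov i hi
    exact hg _ _ (h0 ▸ chain_mono hcov 0 i (Nat.zero_le i) hi.le)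
      (hn ▸ chain_mono hcov (i + 1) n (Nat.succ_le_of_lt hi) le_rfl) (hcov i hi)

variable {S : Set (L × L)} (hS : CoverProjClosed S)

include hS

/-- Transfer of `S`-membership up a transposed prime quotient. -/
lemma transferUp {u y : L} (h : u ⋖ u ⊔ y) : ((u ⊓ y, y) ∈ S ↔ (u, u ⊔ y) ∈ S) := by
  obtain ⟨n, t, h0, hn, hc⟩ := exists_covChain (inf_le_left : u ⊓ y ≤ u)
  have hbd : ∀ i ≤ n, u ⊓ y ≤ t i ∧ t i ≤ u := fun i hi =>
    ⟨h0 ▸ chain_mono hc 0 i (Nat.zero_le i) hi, hn ▸ chain_mono hc i n hi le_rfl⟩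
  have hinfy : ∀ i ≤ n, t i ⊓ y = u ⊓ y := by
    intro i hi
    exact le_antisymm (inf_le_inf_right y (hbd i hi).2)
      (le_inf (hbd i hi).1 inf_le_right)
  have hiy : u ⊓ y ⋖ y := inf_covBy_of_covBy_sup_left h
  have hcovy : ∀ i ≤ n, t i ⋖ t i ⊔ y := by
    intro i hi
    have : t i ⊓ y ⋖ y := hinfy i hi ▸ hiy
    exact covBy_sup_of_inf_covBy_right this
  have key : ∀ i ≤ n, ((t i, t i ⊔ y) ∈ S ↔ (u ⊓ y, y) ∈ S) := by
    intro i
    induction i with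
    | zero =>
      intro _
      rw [h0, sup_eq_right.mpr (inf_le_right : u ⊓ y ≤ y)]
    | succ k ih =>
      intro hk
      have hkn : k < n := Nat.lt_of_succ_le hk
      have hXY : t (k + 1) ⊓ (t k ⊔ y) = t k := by
        rw [inf_comm, sup_inf_assoc_of_le y ((hc k hkn).le)]
        rw [inf_comm y (t (k + 1)), hinfy (k + 1) hk]
        exact sup_eq_left.mpr (hbd k hkn.le).1
      have hXsY : t (k + 1) ⊔ (t k ⊔ y) = t (k + 1) ⊔ y := by
        rw [← sup_assoc, sup_eq_left.mpr (hc k hkn).le]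
      have hne : t (k + 1) ≠ t k ⊔ y := by
        intro he
        have hyu : y ≤ u := le_trans (le_trans le_sup_right he.symm.le) (hbd (k + 1) hk).2
        exact (h.lt).ne (le_antisymm le_sup_left (sup_le le_rfl hyu))
      have c1 : t (k + 1) ⊓ (t k ⊔ y) ⋖ t (k + 1) := by rw [hXY]; exact hc k hkn
      have c2 : t (k + 1) ⊓ (t k ⊔ y) ⋖ t k ⊔ y := by rw [hXY]; exact hcovy k hkn.le
      have c3 : t (k + 1) ⋖ t (k + 1) ⊔ (t k ⊔ y) := by rw [hXsY]; exact hcovy (k + 1) hk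
      have c4 : t k ⊔ y ⋖ t (k + 1) ⊔ (t k ⊔ y) := covBy_sup_of_inf_covBy_left c1
      have := (hS (t (k + 1)) (t k ⊔ y) hne c1 c2 c3 c4).2
      rw [hXY, hXsY] at this
      exact this.symm.trans (ih hkn.le)
  have := key n le_rfl
  rw [hn] at this
  exact this.symm

/-- Transfer of `S`-membership down a transposed prime quotient. -/
lemma transferDown {u y : L} (h : u ⊓ y ⋖ u) : ((y, u ⊔ y) ∈ S ↔ (u ⊓ y, u) ∈ S) := by
  obtain ⟨n, t, h0, hn, hc⟩ := exists_covChain (le_sup_left : u ≤ u ⊔ y)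
  have hbd : ∀ i ≤ n, u ≤ t i ∧ t i ≤ u ⊔ y := fun i hi =>
    ⟨h0 ▸ chain_mono hc 0 i (Nat.zero_le i) hi, hn ▸ chain_mono hc i n hi le_rfl⟩
  have hsupy : ∀ i ≤ n, t i ⊔ y = u ⊔ y := by
    intro i hi
    exact le_antisymm (sup_le (hbd i hi).2 le_sup_right)
      (sup_le_sup_right (hbd i hi).1 y)
  have hyc : y ⋖ u ⊔ y := covBy_sup_of_inf_covBy_left h
  have hcovy : ∀ i ≤ n, t i ⊓ y ⋖ t i := by
    intro i hi
    have : y ⋖ t i ⊔ y := hsupy i hi ▸ hyc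
    exact inf_covBy_of_covBy_sup_right this
  have key : ∀ i ≤ n, ((t i ⊓ y, t i) ∈ S ↔ (u ⊓ y, u) ∈ S) := by
    intro i
    induction i with
    | zero => intro _; rw [h0]
    | succ k ih =>
      intro hk
      have hkn : k < n := Nat.lt_of_succ_le hk
      have hXsY : t k ⊔ (t (k + 1) ⊓ y) = t (k + 1) := by
        rw [inf_comm (t (k + 1)) y, ← sup_inf_assoc_of_le y ((hc k hkn).le),
          hsupy k hkn.le, inf_comm (u ⊔ y) (t (k + 1))]
        exact inf_eq_left.mpr (hbd (k + 1) hk).2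
      have hXY : t k ⊓ (t (k + 1) ⊓ y) = t k ⊓ y := by
        rw [← inf_assoc, inf_eq_left.mpr (hc k hkn).le]
      have hne : t k ≠ t (k + 1) ⊓ y := by
        intro he
        have huy : u ≤ y := le_trans (hbd k hkn.le).1 (le_trans he.le inf_le_right)
        exact (h.lt).ne (inf_eq_left.mpr huy)
      have c1 : t k ⊓ (t (k + 1) ⊓ y) ⋖ t k := by rw [hXY]; exact hcovy k hkn.le
      have c3 : t k ⋖ t k ⊔ (t (k + 1) ⊓ y) := by rw [hXsY]; exact hc k hkn
      have c4 : t (k + 1) ⊓ y ⋖ t k ⊔ (t (k + 1) ⊓ y) := by rw [hXsY]; exact hcovy (k + 1) hk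
      have c2 : t k ⊓ (t (k + 1) ⊓ y) ⋖ t (k + 1) ⊓ y := inf_covBy_of_covBy_sup_left c3
      have := (hS (t k) (t (k + 1) ⊓ y) hne c1 c2 c3 c4).1
      rw [hXY, hXsY] at this
      exact this.symm.trans (ih hkn.le)
  have := key n le_rfl
  rw [hn, inf_eq_right.mpr (le_sup_right : y ≤ u ⊔ y)] at this
  exact this

end Core
section Derived

variable {L : Type*} [Lattice L] [LocallyFiniteOrder L] [IsModularLattice L]
variable {S : Set (L × L)} (hS : CoverProjClosed S)

include hS

lemma good_trans {a b c : L} (hab : a ≤ b) (hbc : b ≤ c)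
    (h1 : Good S a b) (h2 : Good S b c) : Good S a c := by
  intro u v hu hv huv
  by_cases hcase : v ⊓ b ≤ u
  · have hm : v ⊓ (u ⊔ b) = u := by
      rw [inf_comm, sup_inf_assoc_of_le b huv.le]
      exact sup_eq_left.mpr (le_trans (inf_comm b v).le hcase)
    have h' : v ⊓ (u ⊔ b) ⋖ v := by rw [hm]; exact huv
    have hiff := transferDown hS h'
    rw [hm] at hiff
    have hsup : v ⊔ (u ⊔ b) = v ⊔ b := by
      rw [← sup_assoc, sup_eq_left.mpr huv.le]
    rw [hsup] at hiff
    have hcov : u ⊔ b ⋖ v ⊔ b := by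
      have := covBy_sup_of_inf_covBy_left h'
      rwa [hsup] at this
    intro hmem
    exact h2 (u ⊔ b) (v ⊔ b) le_sup_right (sup_le hv hbc) hcov (hiff.mpr hmem)
  · have hv' : u ⊔ (v ⊓ b) = v := by
      have hle : u ⊔ (v ⊓ b) ≤ v := sup_le huv.le inf_le_left
      have hlt : u < u ⊔ (v ⊓ b) :=
        lt_of_le_of_ne le_sup_left (fun e => hcase (sup_eq_left.mp e.symm))
      by_contra hne
      exact huv.2 hlt (lt_of_le_of_ne hle hne)
    have h' : u ⋖ u ⊔ (v ⊓ b) := by rw [hv']; exact huv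
    have hiff := transferUp hS h'
    have hinf : u ⊓ (v ⊓ b) = u ⊓ b := by
      rw [← inf_assoc, inf_eq_left.mpr huv.le]
    rw [hinf, hv'] at hiff
    have hcov : u ⊓ b ⋖ v ⊓ b := by
      have := inf_covBy_of_covBy_sup_left h'
      rwa [hinf] at this
    intro hmem
    exact h1 (u ⊓ b) (v ⊓ b) (le_inf hu hab) inf_le_right hcov (hiff.mpr hmem)

lemma good_up (b c : L) (h : Good S (b ⊓ c) c) : Good S b (b ⊔ c) := by
  intro u v hu hv huv
  have hv' : u ⊔ (v ⊓ c) = v := by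
    rw [inf_comm v c, ← sup_inf_assoc_of_le c huv.le]
    exact inf_eq_right.mpr (le_trans hv (sup_le_sup_right hu c))
  have h' : u ⋖ u ⊔ (v ⊓ c) := by rw [hv']; exact huv
  have hiff := transferUp hS h'
  have hinf : u ⊓ (v ⊓ c) = u ⊓ c := by
    rw [← inf_assoc, inf_eq_left.mpr huv.le]
  rw [hinf, hv'] at hiff
  have hcov : u ⊓ c ⋖ v ⊓ c := by
    have := inf_covBy_of_covBy_sup_left h'
    rwa [hinf] at this
  intro hmem
  exact h (u ⊓ c) (v ⊓ c) (inf_le_inf_right c hu) inf_le_right hcov (hiff.mpr hmem)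

lemma good_down (b c : L) (h : Good S b (b ⊔ c)) : Good S (b ⊓ c) c := by
  intro u v hu hv huv
  have hm : v ⊓ (u ⊔ b) = u := by
    rw [inf_comm, sup_inf_assoc_of_le b huv.le]
    have : b ⊓ v ≤ u := le_trans (inf_le_inf_left b hv) (le_trans (inf_comm b c ▸ hu) le_rfl)
    exact sup_eq_left.mpr this
  have h' : v ⊓ (u ⊔ b) ⋖ v := by rw [hm]; exact huv
  have hiff := transferDown hS h'
  rw [hm] at hiff
  have hsup : v ⊔ (u ⊔ b) = v ⊔ b := by
    rw [← sup_assoc, sup_eq_left.mpr huv.le]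
  rw [hsup] at hiff
  have hcov : u ⊔ b ⋖ v ⊔ b := by
    have := covBy_sup_of_inf_covBy_left h'
    rwa [hsup] at this
  intro hmem
  exact h (u ⊔ b) (v ⊔ b) le_sup_right
    (sup_le (le_trans hv le_sup_right) le_sup_left) hcov (hiff.mpr hmem)

lemma good_inf {a b c : L} (hb : Good S b a) (hc : Good S c a)
    (hba : b ≤ a) (hca : c ≤ a) : Good S (b ⊓ c) a := by
  have h1 : Good S b (b ⊔ c) := good_mono hb le_rfl (sup_le hba hca)
  have h2 : Good S (b ⊓ c) c := good_down hS b c h1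
  exact good_trans hS inf_le_right hca h2 hc

lemma good_sup {a b c : L} (hb : Good S a b) (hc : Good S a c)
    (hab : a ≤ b) (hac : a ≤ c) : Good S a (b ⊔ c) := by
  have h1 : Good S (b ⊓ c) c := good_mono hc (le_inf hab hac) le_rfl
  have h2 : Good S b (b ⊔ c) := good_up hS b c h1
  exact good_trans hS hab le_sup_left hb h2

end Derived

/-- The equivalence class `{x | x ∼ z}` is a convex sublattice of `L`. -/
theorem stmt6 {L : Type*} [Lattice L] [LocallyFiniteOrder L] [IsModularLattice L]
    (S : Set (L × L)) (hS : CoverProjClosed S) (z : L) :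
    (∀ x y : L, Sim S x z → Sim S y z → Sim S (x ⊓ y) z ∧ Sim S (x ⊔ y) z) ∧
    (∀ x y v : L, Sim S x z → Sim S v z → x ≤ y → y ≤ v → Sim S y z) := by
  constructor
  · intro x y hx hy
    rw [sim_iff_good] at hx hy
    constructor
    · rw [sim_iff_good]
      -- Good ((x⊓y)⊓z) ((x⊓y)⊔z)
      have hxz : Good S (x ⊓ z) z := good_mono hx le_rfl le_sup_right
      have hyz : Good S (y ⊓ z) z := good_mono hy le_rfl le_sup_right
      have hA : Good S (x ⊓ y ⊓ z) z := by
        have := good_inf hS hxz hyz inf_le_right inf_le_right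
        have e : x ⊓ z ⊓ (y ⊓ z) = x ⊓ y ⊓ z := by
          rw [inf_inf_inf_comm, inf_idem]
        rwa [e] at this
      have hB : Good S (x ⊓ y ⊓ z) (x ⊓ y) := by
        have hxx : Good S (x ⊓ z) ((x ⊓ z) ⊔ (x ⊓ y)) :=
          good_mono hx le_rfl (le_trans (sup_le inf_le_left inf_le_left) le_sup_left)
        have := good_down hS (x ⊓ z) (x ⊓ y) hxx
        have e : x ⊓ z ⊓ (x ⊓ y) = x ⊓ y ⊓ z := by
          rw [inf_inf_inf_comm, inf_idem, inf_comm z y, inf_assoc, inf_comm y z, ← inf_assoc]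
        rwa [e] at this
      have hC : Good S (x ⊓ y) (x ⊓ y ⊔ z) := good_up hS (x ⊓ y) z hA
      exact good_trans hS inf_le_left le_sup_left hB hC
    · rw [sim_iff_good]
      have hzx : Good S z (x ⊔ z) := good_mono hx inf_le_right le_rfl
      have hzy : Good S z (y ⊔ z) := good_mono hy inf_le_right le_rfl
      have hA : Good S z (x ⊔ y ⊔ z) := by
        have := good_sup hS hzx hzy le_sup_right le_sup_right
        have e : x ⊔ z ⊔ (y ⊔ z) = x ⊔ y ⊔ z := by
          rw [sup_sup_sup_comm, sup_idem]
        rwa [e] at this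
      have hB : Good S (x ⊔ y) (x ⊔ y ⊔ z) := by
        have hxx : Good S ((x ⊔ y) ⊓ (x ⊔ z)) (x ⊔ z) :=
          good_mono hx (le_inf (le_trans inf_le_left le_sup_left)
            (le_trans inf_le_left le_sup_left)) le_rfl
        have := good_up hS (x ⊔ y) (x ⊔ z) hxx
        have e : x ⊔ y ⊔ (x ⊔ z) = x ⊔ y ⊔ z := by
          rw [sup_sup_sup_comm, sup_idem, ← sup_assoc]
        rwa [e] at this
      have hC : Good S ((x ⊔ y) ⊓ z) (x ⊔ y) := by
        have hzz : Good S z (z ⊔ (x ⊔ y)) := by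
          rw [sup_comm z (x ⊔ y)]
          exact good_mono hA le_rfl le_rfl
        have := good_down hS z (x ⊔ y) hzz
        rwa [inf_comm z (x ⊔ y)] at this
      exact good_trans hS inf_le_left le_sup_left hC hB
  · intro x y v hx hv hxy hyv
    rw [sim_iff_good] at hx hv ⊢
    have hB : Good S (y ⊓ z) y := by
      have hvv : Good S (v ⊓ z) ((v ⊓ z) ⊔ y) :=
        good_mono hv le_rfl (sup_le (le_trans inf_le_left le_sup_left)
          (le_trans hyv le_sup_left))
      have := good_down hS (v ⊓ z) y hvv
      have e : v ⊓ z ⊓ y = y ⊓ z := by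
        rw [inf_right_comm, inf_eq_right.mpr hyv]
      rwa [e] at this
    have hC : Good S y (y ⊔ z) := by
      have hxx : Good S (y ⊓ (x ⊔ z)) (x ⊔ z) :=
        good_mono hx (le_inf (le_trans inf_le_left hxy) (le_trans inf_le_left le_sup_left))
          le_rfl
      have := good_up hS y (x ⊔ z) hxx
      have e : y ⊔ (x ⊔ z) = y ⊔ z := by
        rw [← sup_assoc, sup_eq_left.mpr hxy]
      rwa [e] at this
    exact good_trans hS inf_le_left le_sup_left hB hC
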